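/- Let C and D be ascending chain complexes over a field κ such that C_n = D_n = 0 for all n < 0 and such that each C_n admits an ℓ-orthogonal basis and each D_n admits an ℓ-orthogonal basis. Then every filtered quasi-isomorphism f : C → D is a filtered homotopy equivalence; that is, there exists a filtered chain map g : D → C such that g ∘ f is filtered homotopic to the identity of C and f ∘ g is filtered homotopic to the identity of D. -/

import Mathlib

open scoped Classical

universe u v

/-- `ℓ` is a filtration function making `(V, ℓ)` a filtered vector space over `κ`. -/
def IsFiltrationFunction (κ : Type u) [Field κ] {V : Type v} [AddCommGroup V] [Module κ V]
    (ℓ : V → WithBot ℝ) : Prop :=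
  (∀ v : V, ℓ v = ⊥ ↔ v = 0) ∧
    (∀ (c : κ) (v : V), c ≠ 0 → ℓ (c • v) = ℓ v) ∧
      ∀ v w : V, ℓ (v + w) ≤ max (ℓ v) (ℓ w)

/-- A subset `S ⊆ V ∖ {0}` is `ℓ`-orthogonal. -/
def IsOrthogonal (κ : Type u) [Field κ] {V : Type v} [AddCommGroup V] [Module κ V]
    (ℓ : V → WithBot ℝ) (S : Set V) : Prop :=
  (0 : V) ∉ S ∧
    ∀ T : Finset V, (T : Set V) ⊆ S → ∀ c : V → κ,
      ℓ (∑ v ∈ T, c v • v) = (T.filter fun v => c v ≠ 0).sup ℓ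

/-- Transport along an equality of indices. -/
def castL (κ : Type u) [Field κ] {C : ℤ → Type v} [∀ k, AddCommGroup (C k)]
    [∀ k, Module κ (C k)] {i j : ℤ} (h : i = j) : C i →ₗ[κ] C j := by
  subst h; exact LinearMap.id

/-- The boundary map `∂_{k+1} : C_{k+1} → C_k`, viewed as landing in `C_k`. -/
def bdryMap (κ : Type u) [Field κ] {C : ℤ → Type v} [∀ k, AddCommGroup (C k)]
    [∀ k, Module κ (C k)] (d : ∀ k : ℤ, C k →ₗ[κ] C (k - 1)) (k : ℤ) :
    C (k + 1) →ₗ[κ] C k :=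
  (castL κ (show k + 1 - 1 = k by omega)).comp (d (k + 1))

/-- `(C, d, ℓ)` is an ascending chain complex over `κ`. -/
def IsAscendingComplex (κ : Type u) [Field κ] {C : ℤ → Type v} [∀ k, AddCommGroup (C k)]
    [∀ k, Module κ (C k)] (d : ∀ k : ℤ, C k →ₗ[κ] C (k - 1))
    (ℓ : ∀ k : ℤ, C k → WithBot ℝ) : Prop :=
  (∀ (k : ℤ) (x : C k), d (k - 1) (d k x) = 0) ∧
    (∀ k : ℤ, IsFiltrationFunction κ (ℓ k)) ∧
      ∀ (k : ℤ) (x : C k), ℓ (k - 1) (d k x) ≤ ℓ k x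

/-- `f` is a filtered quasi-isomorphism: for every `t ∈ ℝ` and every degree `k`, the map
induced by `f` on the homology of the sublevel complexes `C^{≤t} → D^{≤t}` is bijective,
expressed here at the level of (sublevel) cycles and boundaries. -/
def IsFilteredQuasiIso (κ : Type u) [Field κ] {C D : ℤ → Type v}
    [∀ k, AddCommGroup (C k)] [∀ k, Module κ (C k)]
    [∀ k, AddCommGroup (D k)] [∀ k, Module κ (D k)]
    (dC : ∀ k : ℤ, C k →ₗ[κ] C (k - 1)) (ℓC : ∀ k : ℤ, C k → WithBot ℝ)
    (dD : ∀ k : ℤ, D k →ₗ[κ] D (k - 1)) (ℓD : ∀ k : ℤ, D k → WithBot ℝ)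
    (f : ∀ k : ℤ, C k →ₗ[κ] D k) : Prop :=
  ∀ (t : ℝ) (k : ℤ),
    (∀ y : D k, dD k y = 0 → ℓD k y ≤ (t : WithBot ℝ) →
      ∃ x : C k, dC k x = 0 ∧ ℓC k x ≤ (t : WithBot ℝ) ∧
        ∃ z : D (k + 1), ℓD (k + 1) z ≤ (t : WithBot ℝ) ∧ bdryMap κ dD k z = y - f k x) ∧
    ∀ x : C k, dC k x = 0 → ℓC k x ≤ (t : WithBot ℝ) →
      (∃ w : D (k + 1), ℓD (k + 1) w ≤ (t : WithBot ℝ) ∧ bdryMap κ dD k w = f k x) →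
      ∃ u : C (k + 1), ℓC (k + 1) u ≤ (t : WithBot ℝ) ∧ bdryMap κ dC k u = x

section Tools

variable (κ : Type u) [Field κ]

section CastFacts
variable {C : ℤ → Type v} [∀ k, AddCommGroup (C k)] [∀ k, Module κ (C k)]

@[simp] lemma castL_self {i : ℤ} (h : i = i) (x : C i) : castL κ h x = x := rfl

lemma castL_castL {i j k : ℤ} (h1 : i = j) (h2 : j = k) (x : C i) :
    castL κ h2 (castL κ h1 x) = castL κ (h1.trans h2) x := by subst h1; subst h2; rfl

lemma castL_eq_iff {i j : ℤ} (h : i = j) (x : C i) (y : C j) :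
    castL κ h x = y ↔ x = castL κ h.symm y := by subst h; simp

@[simp] lemma castL_inj {i j : ℤ} (h : i = j) (x y : C i) :
    castL κ h x = castL κ h y ↔ x = y := by subst h; simp

lemma ell_castL (ℓ : ∀ k : ℤ, C k → WithBot ℝ) {i j : ℤ} (h : i = j) (x : C i) :
    ℓ j (castL κ h x) = ℓ i x := by subst h; rfl

lemma d_castL (d : ∀ k : ℤ, C k →ₗ[κ] C (k - 1)) {i j : ℤ} (h : i = j) (x : C i) :
    d j (castL κ h x) = castL κ (by rw [h]) (d i x) := by subst h; rfl

lemma bdryMap_apply (d : ∀ k : ℤ, C k →ₗ[κ] C (k - 1)) (k : ℤ) (x : C (k + 1)) :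
    bdryMap κ d k x = castL κ (show k + 1 - 1 = k by omega) (d (k + 1) x) := rfl

lemma bdryMap_castL (d : ∀ k : ℤ, C k →ₗ[κ] C (k - 1)) {i j : ℤ} (h : i + 1 = j) (x : C (i + 1)) :
    d j (castL κ h x) = castL κ (by omega) (bdryMap κ d i x) := by
  subst h
  rw [castL_self, bdryMap_apply, castL_castL]
  exact (castL_self κ _ _).symm

end CastFacts

lemma map_castL {C D : ℤ → Type v} [∀ k, AddCommGroup (C k)] [∀ k, Module κ (C k)]
    [∀ k, AddCommGroup (D k)] [∀ k, Module κ (D k)]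
    (f : ∀ k : ℤ, C k →ₗ[κ] D k) {i j : ℤ} (h : i = j) (x : C i) :
    f j (castL κ h x) = castL κ h (f i x) := by subst h; rfl

lemma shift_castL {C D : ℤ → Type v} [∀ k, AddCommGroup (C k)] [∀ k, Module κ (C k)]
    [∀ k, AddCommGroup (D k)] [∀ k, Module κ (D k)]
    (s : ∀ k : ℤ, C k →ₗ[κ] D (k + 1)) {i j : ℤ} (h : i = j) (x : C i) :
    s j (castL κ h x) = castL κ (by rw [h]) (s i x) := by subst h; rfl

section Filt
variable {V : Type v} [AddCommGroup V] [Module κ V] {ℓ : V → WithBot ℝ}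
  (hV : IsFiltrationFunction κ ℓ)

include hV

lemma ell_zero : ℓ 0 = ⊥ := (hV.1 0).2 rfl

lemma ell_neg (v : V) : ℓ (-v) = ℓ v := by
  have := hV.2.1 (-1 : κ) v (by norm_num)
  simpa using this

lemma ell_sum_le {α : Type*} (T : Finset α) (u : α → V) :
    ℓ (∑ i ∈ T, u i) ≤ T.sup fun i => ℓ (u i) := by
  classical
  induction T using Finset.induction with
  | empty => simp [ell_zero κ hV]
  | insert _ _ hne ih =>
    rename_i a T'
    rw [Finset.sum_insert hne, Finset.sup_insert]
    exact le_trans (hV.2.2 _ _) (max_le_max le_rfl ih)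

lemma ell_add_le (v w : V) : ℓ (v + w) ≤ max (ℓ v) (ℓ w) := hV.2.2 v w

lemma ell_sub_le (v w : V) : ℓ (v - w) ≤ max (ℓ v) (ℓ w) := by
  rw [sub_eq_add_neg]
  exact le_trans (hV.2.2 _ _) (by rw [ell_neg κ hV])

lemma ell_exists_real {v : V} (hv : v ≠ 0) : ∃ t : ℝ, ℓ v = (t : WithBot ℝ) := by
  have : ℓ v ≠ ⊥ := fun h => hv ((hV.1 v).1 h)
  exact ⟨(ℓ v).unbot this, by simp⟩

end Filt

/-- A linear map bounded on an orthogonal basis is filtered. -/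
lemma filtered_of_bounded_on_basis {V W : Type v} [AddCommGroup V] [Module κ V]
    [AddCommGroup W] [Module κ W] {ℓV : V → WithBot ℝ} {ℓW : W → WithBot ℝ}
    (hW : IsFiltrationFunction κ ℓW) {S : Set V} (hS : IsOrthogonal κ ℓV S)
    (hspan : Submodule.span κ S = ⊤) (φ : V →ₗ[κ] W)
    (hφ : ∀ v ∈ S, ℓW (φ v) ≤ ℓV v) (x : V) : ℓW (φ x) ≤ ℓV x := by
  classical
  have hx : x ∈ Submodule.span κ S := hspan ▸ Submodule.mem_top
  obtain ⟨c, hsupp, hsum⟩ := Submodule.mem_span_set.1 hx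
  -- x = ∑ v in c.support, c v • v
  rw [Finsupp.sum] at hsum
  subst hsum
  rw [map_sum]
  rw [hS.2 c.support hsupp c]
  calc ℓW (∑ v ∈ c.support, φ (c v • v))
      ≤ c.support.sup (fun v => ℓW (φ (c v • v))) := ell_sum_le κ hW _ _
    _ ≤ (c.support.filter fun v => c v ≠ 0).sup ℓV := by
        apply Finset.sup_le
        intro v hv
        have hcv : c v ≠ 0 := Finsupp.mem_support_iff.1 hv
        have h1 : ℓW (φ (c v • v)) = ℓW (φ v) := by
          rw [map_smul]; exact hW.2.1 _ _ hcv
        rw [h1]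
        exact le_trans (hφ v (hsupp hv))
          (Finset.le_sup (by simp [Finset.mem_filter, hv, hcv]))

noncomputable def castF (κ : Type u) [Field κ] {C : ℤ → Type v} [∀ k, AddCommGroup (C k)]
    [∀ k, Module κ (C k)] (i j : ℤ) : C i →ₗ[κ] C j :=
  if h : i = j then castL κ h else 0

lemma castL_eq_castF (κ : Type u) [Field κ] {C : ℤ → Type v} [∀ k, AddCommGroup (C k)]
    [∀ k, Module κ (C k)] {i j : ℤ} (h : i = j) (x : C i) :
    castL κ h x = castF κ i j x := by
  rw [castF, dif_pos h]


end Tools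
section Cone

variable {κ : Type u} [Field κ] {C D : ℤ → Type v}
    [∀ k, AddCommGroup (C k)] [∀ k, Module κ (C k)]
    [∀ k, AddCommGroup (D k)] [∀ k, Module κ (D k)]
    (dC : ∀ k : ℤ, C k →ₗ[κ] C (k - 1)) (ℓC : ∀ k : ℤ, C k → WithBot ℝ)
    (dD : ∀ k : ℤ, D k →ₗ[κ] D (k - 1)) (ℓD : ∀ k : ℤ, D k → WithBot ℝ)
    (f : ∀ n : ℤ, C n →ₗ[κ] D n)

/-- Cone differential `E k → E (k-1)` where `E k = C (k-1) × D k`. -/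
noncomputable def coneD (k : ℤ) : C (k - 1) × D k →ₗ[κ] C (k - 1 - 1) × D (k - 1) :=
  LinearMap.prod (-((dC (k - 1)).comp (LinearMap.fst κ _ _)))
    ((dD k).comp (LinearMap.snd κ _ _) + (f (k - 1)).comp (LinearMap.fst κ _ _))

lemma coneD_apply (k : ℤ) (x : C (k - 1) × D k) :
    coneD dC dD f k x = (-(dC (k - 1) x.1), dD k x.2 + f (k - 1) x.1) := rfl

/-- Cast for the cone family. -/
noncomputable def coneCast {i j : ℤ} (h : i = j) : C (i - 1) × D i →ₗ[κ] C (j - 1) × D j :=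
  LinearMap.prod ((castL κ (show i - 1 = j - 1 by rw [h])).comp (LinearMap.fst κ _ _))
    ((castL κ h).comp (LinearMap.snd κ _ _))

lemma coneCast_apply {i j : ℤ} (h : i = j) (x : C (i - 1) × D i) :
    coneCast (κ := κ) (C := C) (D := D) h x
      = (castL κ (show i - 1 = j - 1 by rw [h]) x.1, castL κ h x.2) := rfl

@[simp] lemma coneCast_self {i : ℤ} (h : i = i) (x : C (i - 1) × D i) :
    coneCast (κ := κ) (C := C) (D := D) h x = x := rfl

lemma coneCast_coneCast {i j m : ℤ} (h1 : i = j) (h2 : j = m) (x : C (i - 1) × D i) :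
    coneCast (κ := κ) (C := C) (D := D) h2 (coneCast (κ := κ) h1 x) = coneCast (κ := κ) (h1.trans h2) x := by
  subst h1; subst h2; rfl

@[simp] lemma coneCast_inj {i j : ℤ} (h : i = j) (x y : C (i - 1) × D i) :
    coneCast (κ := κ) (C := C) (D := D) h x = coneCast (κ := κ) h y ↔ x = y := by
  subst h; simp

/-- Cone boundary `E (k+1) → E k`. -/
noncomputable def coneBdry (k : ℤ) : C (k + 1 - 1) × D (k + 1) →ₗ[κ] C (k - 1) × D k :=
  (coneCast (κ := κ) (show k + 1 - 1 = k by omega)).comp (coneD dC dD f (k + 1))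

lemma coneBdry_apply (k : ℤ) (x : C (k + 1 - 1) × D (k + 1)) :
    coneBdry dC dD f k x
      = coneCast (κ := κ) (show k + 1 - 1 = k by omega) (coneD dC dD f (k + 1) x) :=
  rfl

lemma coneD_coneCast {i j : ℤ} (h : i = j) (x : C (i - 1) × D i) :
    coneD dC dD f j (coneCast (κ := κ) h x)
      = coneCast (κ := κ) (show i - 1 = j - 1 by rw [h]) (coneD dC dD f i x) := by
  subst h; rfl

lemma coneBdry_coneCast {i j : ℤ} (h : i + 1 = j) (x : C (i + 1 - 1) × D (i + 1)) :
    coneD dC dD f j (coneCast (κ := κ) h x)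
      = coneCast (κ := κ) (show i = j - 1 by omega) (coneBdry dC dD f i x) := by
  subst h
  rw [coneCast_self, coneBdry_apply, coneCast_coneCast]
  exact (coneCast_self _ _).symm

/-- shift-naturality for a contraction candidate. -/
lemma coneShift_coneCast (s : ∀ k : ℤ, C (k - 1) × D k →ₗ[κ] C (k + 1 - 1) × D (k + 1))
    {i j : ℤ} (h : i = j) (x : C (i - 1) × D i) :
    s j (coneCast (κ := κ) h x)
      = coneCast (κ := κ) (show i + 1 = j + 1 by rw [h]) (s i x) := by
  subst h; rfl

/-- Cone filtration. -/
noncomputable def coneL (ℓC : ∀ k : ℤ, C k → WithBot ℝ) (ℓD : ∀ k : ℤ, D k → WithBot ℝ)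
    (k : ℤ) (x : C (k - 1) × D k) : WithBot ℝ := max (ℓC (k - 1) x.1) (ℓD k x.2)

lemma coneL_coneCast {i j : ℤ} (h : i = j) (x : C (i - 1) × D i) :
    coneL ℓC ℓD j (coneCast (κ := κ) h x) = coneL ℓC ℓD i x := by
  subst h; rfl

lemma coneL_filtration (hC : ∀ k : ℤ, IsFiltrationFunction κ (ℓC k))
    (hD : ∀ k : ℤ, IsFiltrationFunction κ (ℓD k)) (k : ℤ) :
    IsFiltrationFunction κ (coneL (C := C) (D := D) ℓC ℓD k) := by
  refine ⟨?_, ?_, ?_⟩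
  · intro v
    constructor
    · intro h
      have h1 : ℓC (k - 1) v.1 = ⊥ := le_bot_iff.1 (h ▸ le_max_left _ (ℓD k v.2))
      have h2 : ℓD k v.2 = ⊥ := le_bot_iff.1 (h ▸ le_max_right (ℓC (k - 1) v.1) _)
      exact Prod.ext ((hC (k - 1)).1 v.1 |>.1 h1) ((hD k).1 v.2 |>.1 h2)
    · rintro rfl
      simp [coneL, ell_zero κ (hC (k - 1)), ell_zero κ (hD k)]
  · intro c v hc
    simp only [coneL, Prod.smul_fst, Prod.smul_snd]
    rw [(hC (k - 1)).2.1 c v.1 hc, (hD k).2.1 c v.2 hc]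
  · intro v w
    simp only [coneL, Prod.fst_add, Prod.snd_add]
    have h1 := (hC (k - 1)).2.2 v.1 w.1
    have h2 := (hD k).2.2 v.2 w.2
    rw [max_le_iff]
    constructor
    · exact le_trans h1 (max_le_max (le_max_left _ _) (le_max_left _ _))
    · exact le_trans h2 (max_le_max (le_max_right _ _) (le_max_right _ _))

lemma coneD_sq (hC : ∀ (k : ℤ) (x : C k), dC (k - 1) (dC k x) = 0)
    (hD : ∀ (k : ℤ) (x : D k), dD (k - 1) (dD k x) = 0)
    (hfchain : ∀ (n : ℤ) (x : C n), dD n (f n x) = f (n - 1) (dC n x))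
    (k : ℤ) (x : C (k - 1) × D k) :
    coneD dC dD f (k - 1) (coneD dC dD f k x) = 0 := by
  simp only [coneD_apply, map_add, map_neg, hC, hD, hfchain, Prod.ext_iff]
  refine ⟨by simp, ?_⟩
  simp only [Prod.snd_zero]
  abel

lemma coneD_le (hC : IsAscendingComplex κ dC ℓC) (hD : IsAscendingComplex κ dD ℓD)
    (hffilt : ∀ (n : ℤ) (x : C n), ℓD n (f n x) ≤ ℓC n x)
    (k : ℤ) (x : C (k - 1) × D k) :
    coneL ℓC ℓD (k - 1) (coneD dC dD f k x) ≤ coneL ℓC ℓD k x := by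
  simp only [coneD_apply, coneL]
  rw [max_le_iff]
  constructor
  · rw [ell_neg κ (hC.2.1 (k - 1 - 1))]
    exact le_trans (hC.2.2 (k - 1) x.1) (le_max_left _ _)
  · refine le_trans (ell_add_le κ (hD.2.1 (k - 1)) _ _) (max_le ?_ ?_)
    · exact le_trans (hD.2.2 k x.2) (le_max_right _ _)
    · exact le_trans (hffilt (k - 1) x.1) (le_max_left _ _)

end Cone
section Acyclic

variable {κ : Type u} [Field κ] {C D : ℤ → Type v}
    [∀ k, AddCommGroup (C k)] [∀ k, Module κ (C k)]
    [∀ k, AddCommGroup (D k)] [∀ k, Module κ (D k)]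
    (dC : ∀ k : ℤ, C k →ₗ[κ] C (k - 1)) (ℓC : ∀ k : ℤ, C k → WithBot ℝ)
    (dD : ∀ k : ℤ, D k →ₗ[κ] D (k - 1)) (ℓD : ∀ k : ℤ, D k → WithBot ℝ)
    (f : ∀ n : ℤ, C n →ₗ[κ] D n)

lemma coneAcyclic (hC : IsAscendingComplex κ dC ℓC) (hD : IsAscendingComplex κ dD ℓD)
    (hCneg : ∀ n : ℤ, n < 0 → ∀ x : C n, x = 0)
    (hfchain : ∀ (n : ℤ) (x : C n), dD n (f n x) = f (n - 1) (dC n x))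
    (hffilt : ∀ (n : ℤ) (x : C n), ℓD n (f n x) ≤ ℓC n x)
    (hfq : IsFilteredQuasiIso κ dC ℓC dD ℓD f)
    (k : ℤ) (hk : 0 ≤ k) (t : ℝ) (x : C (k - 1) × D k)
    (hdx : coneD dC dD f k x = 0) (hlx : coneL ℓC ℓD k x ≤ (t : WithBot ℝ)) :
    ∃ y : C (k + 1 - 1) × D (k + 1),
      coneL ℓC ℓD (k + 1) y ≤ (t : WithBot ℝ) ∧ coneBdry dC dD f k y = x := by
  rw [coneD_apply, Prod.ext_iff] at hdx
  have hc : dC (k - 1) x.1 = 0 := neg_eq_zero.1 hdx.1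
  have hd2 : dD k x.2 + f (k - 1) x.1 = 0 := hdx.2
  have hlc : ℓC (k - 1) x.1 ≤ (t : WithBot ℝ) := le_trans (le_max_left _ _) hlx
  have hld : ℓD k x.2 ≤ (t : WithBot ℝ) := le_trans (le_max_right _ _) hlx
  -- produce a primitive of x.1
  obtain ⟨u, hul, hub⟩ : ∃ u : C (k - 1 + 1),
      ℓC (k - 1 + 1) u ≤ (t : WithBot ℝ) ∧ bdryMap κ dC (k - 1) u = x.1 := by
    rcases eq_or_lt_of_le hk with h0 | h1
    · -- k = 0 : x.1 = 0
      obtain rfl : k = 0 := h0.symm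
      have hx1 : x.1 = 0 := hCneg (0 - 1) (by norm_num) x.1
      exact ⟨0, by rw [ell_zero κ (hC.2.1 _)]; exact bot_le, by rw [map_zero, hx1]⟩
    · -- k ≥ 1 : use injectivity clause of hfq at degree k - 1
      apply (hfq t (k - 1)).2 x.1 hc hlc
      refine ⟨castL κ (show k = k - 1 + 1 by omega) (-x.2), ?_, ?_⟩
      · rw [ell_castL κ ℓD, ell_neg κ (hD.2.1 k)]; exact hld
      · rw [bdryMap_apply, d_castL κ dD, castL_castL, castL_self, map_neg]
        exact neg_eq_of_add_eq_zero_right hd2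
  set u₀ : C k := castL κ (show k - 1 + 1 = k by omega) u with hu₀
  have hdu₀ : dC k u₀ = x.1 := by
    rw [hu₀, d_castL κ dC, ← bdryMap_apply]
    exact hub
  have hu₀l : ℓC k u₀ ≤ (t : WithBot ℝ) := by rw [hu₀, ell_castL κ ℓC]; exact hul
  -- the cycle x.2 + f k u₀
  have hy₀c : dD k (x.2 + f k u₀) = 0 := by
    rw [map_add, hfchain k u₀, hdu₀]
    exact hd2
  have hy₀l : ℓD k (x.2 + f k u₀) ≤ (t : WithBot ℝ) :=
    le_trans (ell_add_le κ (hD.2.1 k) _ _) (max_le hld (le_trans (hffilt k u₀) hu₀l))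
  obtain ⟨x₀, hx₀c, hx₀l, z, hzl, hzb⟩ := (hfq t k).1 (x.2 + f k u₀) hy₀c hy₀l
  refine ⟨(castL κ (show k = k + 1 - 1 by omega) (x₀ - u₀), z), ?_, ?_⟩
  · refine max_le ?_ hzl
    rw [ell_castL κ ℓC]
    exact le_trans (ell_sub_le κ (hC.2.1 k) _ _) (max_le hx₀l hu₀l)
  · rw [coneBdry_apply, coneD_apply, coneCast_apply, Prod.ext_iff]
    constructor
    · -- first component
      show castL κ _ (-(dC (k + 1 - 1) (castL κ _ (x₀ - u₀)))) = x.1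
      rw [d_castL κ dC, ← map_neg, castL_castL, castL_self, map_sub, hx₀c, hdu₀]
      simp
    · -- second component
      show castL κ _ (dD (k + 1) z + f (k + 1 - 1) (castL κ _ (x₀ - u₀))) = x.2
      rw [map_add, map_castL κ f, castL_castL, castL_self, ← bdryMap_apply, hzb]
      rw [map_sub]
      abel

end Acyclic
lemma int_sub_one_add_one (k : ℤ) : k - 1 + 1 = k := by omega

section Step

variable {κ : Type u} [Field κ] {C D : ℤ → Type v}
    [∀ k, AddCommGroup (C k)] [∀ k, Module κ (C k)]
    [∀ k, AddCommGroup (D k)] [∀ k, Module κ (D k)]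
    (dC : ∀ k : ℤ, C k →ₗ[κ] C (k - 1)) (ℓC : ∀ k : ℤ, C k → WithBot ℝ)
    (dD : ∀ k : ℤ, D k →ₗ[κ] D (k - 1)) (ℓD : ∀ k : ℤ, D k → WithBot ℝ)
    (f : ∀ n : ℤ, C n →ₗ[κ] D n)

lemma stepEx (hC : IsAscendingComplex κ dC ℓC) (hD : IsAscendingComplex κ dD ℓD)
    (hCneg : ∀ n : ℤ, n < 0 → ∀ x : C n, x = 0)
    (hCbasis : ∀ n : ℤ, ∃ S : Set (C n), IsOrthogonal κ (ℓC n) S ∧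
      LinearIndependent κ (fun x : S => (x : C n)) ∧ Submodule.span κ S = ⊤)
    (hDbasis : ∀ n : ℤ, ∃ S : Set (D n), IsOrthogonal κ (ℓD n) S ∧
      LinearIndependent κ (fun x : S => (x : D n)) ∧ Submodule.span κ S = ⊤)
    (hfchain : ∀ (n : ℤ) (x : C n), dD n (f n x) = f (n - 1) (dC n x))
    (hffilt : ∀ (n : ℤ) (x : C n), ℓD n (f n x) ≤ ℓC n x)
    (hfq : IsFilteredQuasiIso κ dC ℓC dD ℓD f)
    (k : ℤ) (hk : 0 ≤ k)
    (sp : C (k - 1 - 1) × D (k - 1) →ₗ[κ] C (k - 1 + 1 - 1) × D (k - 1 + 1))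
    (hspF : ∀ y, coneL ℓC ℓD (k - 1 + 1) (sp y) ≤ coneL ℓC ℓD (k - 1) y)
    (hspC : ∀ y : C (k - 1 - 1) × D (k - 1), coneD dC dD f (k - 1) y = 0 →
      coneBdry dC dD f (k - 1) (sp y) = y) :
    ∃ s : C (k - 1) × D k →ₗ[κ] C (k + 1 - 1) × D (k + 1),
      (∀ x, coneL ℓC ℓD (k + 1) (s x) ≤ coneL ℓC ℓD k x) ∧
      ∀ x, coneBdry dC dD f k (s x)
          + coneCast (κ := κ) (int_sub_one_add_one k) (sp (coneD dC dD f k x)) = x := by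
  classical
  have hfiltE : ∀ m : ℤ, IsFiltrationFunction κ (coneL (C := C) (D := D) ℓC ℓD m) :=
    coneL_filtration ℓC ℓD hC.2.1 hD.2.1
  set φ : C (k - 1) × D k →ₗ[κ] C (k - 1) × D k :=
    LinearMap.id - (coneCast (κ := κ) (show k - 1 + 1 = k by omega)).comp
      (sp.comp (coneD dC dD f k)) with hφ
  have hφd : ∀ x, coneD dC dD f k (φ x) = 0 := by
    intro x
    have h1 : coneD dC dD f k (coneCast (κ := κ) (show k - 1 + 1 = k by omega)
        (sp (coneD dC dD f k x))) = coneD dC dD f k x := by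
      rw [coneBdry_coneCast (h := show k - 1 + 1 = k by omega)]
      rw [hspC (coneD dC dD f k x) (coneD_sq dC dD f hC.1 hD.1 hfchain k x)]
      exact coneCast_self _ _
    simp only [hφ, LinearMap.sub_apply, LinearMap.id_apply, LinearMap.comp_apply, map_sub, h1,
      sub_self]
  have hφl : ∀ x, coneL ℓC ℓD k (φ x) ≤ coneL ℓC ℓD k x := by
    intro x
    simp only [hφ, LinearMap.sub_apply, LinearMap.id_apply, LinearMap.comp_apply]
    refine le_trans (ell_sub_le κ (hfiltE k) _ _) (max_le le_rfl ?_)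
    rw [coneL_coneCast ℓC ℓD]
    exact le_trans (hspF _) (coneD_le dC ℓC dD ℓD f hC hD hffilt k x)
  -- primitive chooser
  have hex : ∀ x : C (k - 1) × D k, coneD dC dD f k x = 0 →
      ∃ y : C (k + 1 - 1) × D (k + 1),
        coneL ℓC ℓD (k + 1) y ≤ coneL ℓC ℓD k x ∧ coneBdry dC dD f k y = x := by
    intro x hx
    by_cases h0 : x = 0
    · subst h0
      exact ⟨0, by rw [ell_zero κ (hfiltE (k + 1))]; exact bot_le, map_zero _⟩
    · obtain ⟨t, ht⟩ := ell_exists_real κ (hfiltE k) h0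
      obtain ⟨y, hy1, hy2⟩ := coneAcyclic dC ℓC dD ℓD f hC hD hCneg hfchain hffilt hfq
        k hk t x hx (le_of_eq ht)
      exact ⟨y, by rw [ht]; exact hy1, hy2⟩
  -- bases
  obtain ⟨SC, hSCorth, hSCind, hSCspan⟩ := hCbasis (k - 1)
  obtain ⟨SD, hSDorth, hSDind, hSDspan⟩ := hDbasis k
  set bC : Module.Basis SC κ (C (k - 1)) :=
    Module.Basis.mk hSCind (by rw [Subtype.range_coe]; exact hSCspan.ge) with hbC
  set bD : Module.Basis SD κ (D k) :=
    Module.Basis.mk hSDind (by rw [Subtype.range_coe]; exact hSDspan.ge) with hbD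
  set B : Module.Basis (SC ⊕ SD) κ (C (k - 1) × D k) := bC.prod bD with hB
  set yfun : (SC ⊕ SD) → C (k + 1 - 1) × D (k + 1) :=
    fun i => (hex (φ (B i)) (hφd _)).choose with hyfun
  have hyl : ∀ i, coneL ℓC ℓD (k + 1) (yfun i) ≤ coneL ℓC ℓD k (B i) :=
    fun i => le_trans (hex (φ (B i)) (hφd _)).choose_spec.1 (hφl _)
  have hyb : ∀ i, coneBdry dC dD f k (yfun i) = φ (B i) :=
    fun i => (hex (φ (B i)) (hφd _)).choose_spec.2
  set s : C (k - 1) × D k →ₗ[κ] C (k + 1 - 1) × D (k + 1) := B.constr ℕ yfun with hs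
  have hsb : ∀ x, coneBdry dC dD f k (s x) = φ x := by
    have : (coneBdry dC dD f k).comp s = φ := by
      apply B.ext
      intro i
      rw [LinearMap.comp_apply, hs, B.constr_basis]
      exact hyb i
    intro x
    rw [← this, LinearMap.comp_apply]
  refine ⟨s, ?_, ?_⟩
  · -- filteredness
    intro x
    have claim1 : ∀ a : C (k - 1), coneL ℓC ℓD (k + 1) (s (a, 0)) ≤ ℓC (k - 1) a := by
      have := filtered_of_bounded_on_basis κ (hfiltE (k + 1)) hSCorth hSCspan
        (s.comp (LinearMap.inl κ (C (k - 1)) (D k))) ?_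
      · intro a; exact this a
      · intro v hv
        have hBv : B (Sum.inl ⟨v, hv⟩) = ((v : C (k - 1)), (0 : D k)) := by
          apply Prod.ext
          · rw [hB, Module.Basis.prod_apply_inl_fst, hbC, Module.Basis.mk_apply]
          · rw [hB, Module.Basis.prod_apply_inl_snd]
        have h1 : s.comp (LinearMap.inl κ (C (k - 1)) (D k)) v = yfun (Sum.inl ⟨v, hv⟩) := by
          rw [LinearMap.comp_apply, LinearMap.inl_apply, ← hBv, hs, B.constr_basis]
        rw [h1]
        refine le_trans (hyl _) ?_
        rw [hBv]
        show max (ℓC (k - 1) v) (ℓD k 0) ≤ ℓC (k - 1) v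
        rw [ell_zero κ (hD.2.1 k)]
        exact max_le le_rfl bot_le
    have claim2 : ∀ b : D k, coneL ℓC ℓD (k + 1) (s (0, b)) ≤ ℓD k b := by
      have := filtered_of_bounded_on_basis κ (hfiltE (k + 1)) hSDorth hSDspan
        (s.comp (LinearMap.inr κ (C (k - 1)) (D k))) ?_
      · intro b; exact this b
      · intro v hv
        have hBv : B (Sum.inr ⟨v, hv⟩) = ((0 : C (k - 1)), (v : D k)) := by
          apply Prod.ext
          · rw [hB, Module.Basis.prod_apply_inr_fst]
          · rw [hB, Module.Basis.prod_apply_inr_snd, hbD, Module.Basis.mk_apply]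
        have h1 : s.comp (LinearMap.inr κ (C (k - 1)) (D k)) v = yfun (Sum.inr ⟨v, hv⟩) := by
          rw [LinearMap.comp_apply, LinearMap.inr_apply, ← hBv, hs, B.constr_basis]
        rw [h1]
        refine le_trans (hyl _) ?_
        rw [hBv]
        show max (ℓC (k - 1) 0) (ℓD k v) ≤ ℓD k v
        rw [ell_zero κ (hC.2.1 (k - 1))]
        exact max_le bot_le le_rfl
    have hxsplit : x = ((x.1, (0 : D k)) : C (k - 1) × D k) + ((0 : C (k - 1)), x.2) := by
      apply Prod.ext <;> simp
    calc coneL ℓC ℓD (k + 1) (s x)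
        = coneL ℓC ℓD (k + 1) (s (x.1, 0) + s (0, x.2)) := by rw [← map_add, ← hxsplit]
      _ ≤ max (coneL ℓC ℓD (k + 1) (s (x.1, 0))) (coneL ℓC ℓD (k + 1) (s (0, x.2))) :=
          ell_add_le κ (hfiltE (k + 1)) _ _
      _ ≤ max (ℓC (k - 1) x.1) (ℓD k x.2) := max_le_max (claim1 x.1) (claim2 x.2)
      _ = coneL ℓC ℓD k x := rfl
  · -- the homotopy identity
    intro x
    rw [hsb x]
    simp only [hφ, LinearMap.sub_apply, LinearMap.id_apply, LinearMap.comp_apply]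
    abel

end Step
section Chain

variable {κ : Type u} [Field κ] {C D : ℤ → Type v}
    [∀ k, AddCommGroup (C k)] [∀ k, Module κ (C k)]
    [∀ k, AddCommGroup (D k)] [∀ k, Module κ (D k)]
    (dC : ∀ k : ℤ, C k →ₗ[κ] C (k - 1)) (ℓC : ∀ k : ℤ, C k → WithBot ℝ)
    (dD : ∀ k : ℤ, D k →ₗ[κ] D (k - 1)) (ℓD : ∀ k : ℤ, D k → WithBot ℝ)
    (f : ∀ n : ℤ, C n →ₗ[κ] D n)

/-- family of candidate contractions. -/
def Fam (κ : Type u) [Field κ] (C D : ℤ → Type v)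
    [∀ k, AddCommGroup (C k)] [∀ k, Module κ (C k)]
    [∀ k, AddCommGroup (D k)] [∀ k, Module κ (D k)] : Type v :=
  ∀ k : ℤ, C (k - 1) × D k →ₗ[κ] C (k + 1 - 1) × D (k + 1)

def FamFilt (s : Fam κ C D) (k : ℤ) : Prop :=
  ∀ x, coneL ℓC ℓD (k + 1) (s k x) ≤ coneL ℓC ℓD k x

def FamId (s : Fam κ C D) (k : ℤ) : Prop :=
  ∀ x, coneBdry dC dD f k (s k x)
      + coneCast (κ := κ) (int_sub_one_add_one k) (s (k - 1) (coneD dC dD f k x)) = x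

lemma FamId.cyc {s : Fam κ C D} {k : ℤ} (h : FamId dC dD f s k) :
    ∀ y, coneD dC dD f k y = 0 → coneBdry dC dD f k (s k y) = y := by
  intro y hy
  have := h y
  rwa [hy, map_zero, map_zero, add_zero] at this

/-- All hypotheses bundled. -/
def Hyp : Prop :=
  IsAscendingComplex κ dC ℓC ∧ IsAscendingComplex κ dD ℓD ∧
  (∀ n : ℤ, n < 0 → ∀ x : C n, x = 0) ∧
  (∀ n : ℤ, n < 0 → ∀ x : D n, x = 0) ∧
  (∀ n : ℤ, ∃ S : Set (C n), IsOrthogonal κ (ℓC n) S ∧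
      LinearIndependent κ (fun x : S => (x : C n)) ∧ Submodule.span κ S = ⊤) ∧
  (∀ n : ℤ, ∃ S : Set (D n), IsOrthogonal κ (ℓD n) S ∧
      LinearIndependent κ (fun x : S => (x : D n)) ∧ Submodule.span κ S = ⊤) ∧
  (∀ (n : ℤ) (x : C n), dD n (f n x) = f (n - 1) (dC n x)) ∧
  (∀ (n : ℤ) (x : C n), ℓD n (f n x) ≤ ℓC n x) ∧
  IsFilteredQuasiIso κ dC ℓC dD ℓD f

def Spec (n : ℕ) (s : Fam κ C D) : Prop :=
  (∀ k, FamFilt ℓC ℓD s k) ∧ (∀ k, k < (n : ℤ) → FamId dC dD f s k) ∧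
    ∀ k : ℤ, (n : ℤ) ≤ k → s k = 0

/-- update a family at one index. -/
noncomputable def updFun (n : ℤ) (sold : Fam κ C D)
    (snew : C (n - 1) × D n →ₗ[κ] C (n + 1 - 1) × D (n + 1)) : Fam κ C D :=
  fun k =>
    if h : k = n then
      (coneCast (κ := κ) (show n + 1 = k + 1 by rw [h])).comp
        (snew.comp (coneCast (κ := κ) h))
    else sold k

lemma updFun_ne (n : ℤ) (sold : Fam κ C D) (snew) {k : ℤ} (h : k ≠ n) :
    updFun n sold snew k = sold k := dif_neg h

lemma updFun_self (n : ℤ) (sold : Fam κ C D) (snew) (x) :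
    updFun n sold snew n x = snew x := by
  unfold updFun
  rw [dif_pos rfl]
  simp [coneCast_self]

lemma stepChoice_ex (H : Hyp dC ℓC dD ℓD f) (n : ℕ) (p : {s : Fam κ C D // Spec dC ℓC dD ℓD f n s}) :
    ∃ s : C ((n : ℤ) - 1) × D (n : ℤ) →ₗ[κ] C ((n : ℤ) + 1 - 1) × D ((n : ℤ) + 1),
      (∀ x, coneL ℓC ℓD ((n : ℤ) + 1) (s x) ≤ coneL ℓC ℓD (n : ℤ) x) ∧
      ∀ x, coneBdry dC dD f (n : ℤ) (s x)
          + coneCast (κ := κ) (show (n : ℤ) - 1 + 1 = (n : ℤ) by omega)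
              (p.1 ((n : ℤ) - 1) (coneD dC dD f (n : ℤ) x)) = x := by
  obtain ⟨hC, hD, hCneg, hDneg, hCbasis, hDbasis, hfchain, hffilt, hfq⟩ := H
  exact stepEx dC ℓC dD ℓD f hC hD hCneg hCbasis hDbasis hfchain hffilt hfq
    (n : ℤ) (Int.ofNat_nonneg n) (p.1 ((n : ℤ) - 1)) (p.2.1 ((n : ℤ) - 1))
    ((p.2.2.1 ((n : ℤ) - 1) (by omega)).cyc dC dD f)

noncomputable def chain (H : Hyp dC ℓC dD ℓD f) :
    ∀ n : ℕ, {s : Fam κ C D // Spec dC ℓC dD ℓD f n s}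
  | 0 => ⟨fun _ => 0, by
      refine ⟨?_, ?_, fun k _ => rfl⟩
      · intro k x
        have h0 : coneL (C := C) (D := D) ℓC ℓD (k + 1) 0 = ⊥ :=
          ell_zero κ (coneL_filtration ℓC ℓD H.1.2.1 H.2.1.2.1 (k + 1))
        simp only [Pi.zero_apply, LinearMap.zero_apply, h0]
        exact bot_le
      · intro k hk x
        have hx1 : x.1 = 0 := H.2.2.1 (k - 1) (by omega) x.1
        have hx2 : x.2 = 0 := H.2.2.2.1 k hk x.2
        have hx : x = 0 := Prod.ext hx1 hx2
        simp [hx]⟩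
  | (n + 1) =>
      ⟨updFun (κ := κ) (n : ℤ) (chain H n).1 (stepChoice_ex dC ℓC dD ℓD f H n (chain H n)).choose, by
        have hsF := (stepChoice_ex dC ℓC dD ℓD f H n (chain H n)).choose_spec.1
        have hsId := (stepChoice_ex dC ℓC dD ℓD f H n (chain H n)).choose_spec.2
        set snew := (stepChoice_ex dC ℓC dD ℓD f H n (chain H n)).choose with hsnew
        refine ⟨?_, ?_, ?_⟩
        · intro k x
          by_cases h : k = (n : ℤ)
          · subst h
            rw [updFun_self]
            exact hsF x
          · rw [updFun_ne _ _ _ h]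
            exact (chain H n).2.1 k x
        · intro k hk x
          by_cases h : k = (n : ℤ)
          · subst h
            rw [updFun_self, updFun_ne _ _ _ (by omega : (n : ℤ) - 1 ≠ (n : ℤ))]
            exact hsId x
          · have hkn : k < (n : ℤ) := by push_cast at hk; omega
            rw [updFun_ne _ _ _ h, updFun_ne _ _ _ (by omega : k - 1 ≠ (n : ℤ))]
            exact (chain H n).2.2.1 k hkn x
        · intro k hk
          have h : k ≠ (n : ℤ) := by push_cast at hk; omega
          rw [updFun_ne _ _ _ h]
          exact (chain H n).2.2.2 k (by push_cast at hk; omega)⟩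

lemma chain_ne_eq (H : Hyp dC ℓC dD ℓD f) (n : ℕ) (k : ℤ) (h : k ≠ (n : ℤ)) :
    (chain dC ℓC dD ℓD f H (n + 1)).1 k = (chain dC ℓC dD ℓD f H n).1 k := by
  show (updFun (κ := κ) (n : ℤ) (chain dC ℓC dD ℓD f H n).1
      (stepChoice_ex dC ℓC dD ℓD f H n (chain dC ℓC dD ℓD f H n)).choose) k
    = (chain dC ℓC dD ℓD f H n).1 k
  exact updFun_ne _ _ _ h

lemma chain_stab (H : Hyp dC ℓC dD ℓD f) :
    ∀ (m n : ℕ), n ≤ m → ∀ k : ℤ, k < (n : ℤ) →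
      (chain dC ℓC dD ℓD f H m).1 k = (chain dC ℓC dD ℓD f H n).1 k := by
  intro m
  induction m with
  | zero =>
    intro n hn k _
    obtain rfl : n = 0 := Nat.le_zero.1 hn
    rfl
  | succ m ih =>
    intro n hn k hk
    rcases Nat.eq_or_lt_of_le hn with he | hl
    · rw [he]
    · have hnm : n ≤ m := by omega
      have hcast : (n : ℤ) ≤ (m : ℤ) := by exact_mod_cast hnm
      rw [chain_ne_eq dC ℓC dD ℓD f H m k (by omega)]
      exact ih n hnm k hk

lemma cone_contraction (H : Hyp dC ℓC dD ℓD f) :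
    ∃ s : Fam κ C D, (∀ k, FamFilt ℓC ℓD s k) ∧ ∀ k, FamId dC dD f s k := by
  refine ⟨fun k => (chain dC ℓC dD ℓD f H (k.toNat + 1)).1 k, ?_, ?_⟩
  · intro k x
    exact (chain dC ℓC dD ℓD f H (k.toNat + 1)).2.1 k x
  · intro k
    have h1 : k < ((k.toNat + 1 : ℕ) : ℤ) := by
      push_cast
      have := Int.self_le_toNat k
      omega
    have hstab : (chain dC ℓC dD ℓD f H (k.toNat + 1)).1 (k - 1)
        = (chain dC ℓC dD ℓD f H ((k - 1).toNat + 1)).1 (k - 1) := by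
      apply chain_stab dC ℓC dD ℓD f H (k.toNat + 1) ((k - 1).toNat + 1)
        (by have := Int.toNat_le_toNat (show k - 1 ≤ k by omega); omega) (k - 1)
      push_cast
      have := Int.self_le_toNat (k - 1)
      omega
    intro x
    have := (chain dC ℓC dD ℓD f H (k.toNat + 1)).2.2.1 k h1 x
    rw [hstab] at this
    exact this

end Chain
set_option maxHeartbeats 2000000 in
/-- Every filtered quasi-isomorphism between nonnegatively supported ascending chain
complexes admitting orthogonal bases is a filtered homotopy equivalence. -/
theorem filtered_quasiIso_is_filtered_homotopy_equivalence (κ : Type u) [Field κ]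
    {C D : ℤ → Type v}
    [∀ k, AddCommGroup (C k)] [∀ k, Module κ (C k)]
    [∀ k, AddCommGroup (D k)] [∀ k, Module κ (D k)]
    (dC : ∀ k : ℤ, C k →ₗ[κ] C (k - 1)) (ℓC : ∀ k : ℤ, C k → WithBot ℝ)
    (dD : ∀ k : ℤ, D k →ₗ[κ] D (k - 1)) (ℓD : ∀ k : ℤ, D k → WithBot ℝ)
    (hC : IsAscendingComplex κ dC ℓC) (hD : IsAscendingComplex κ dD ℓD)
    (hCneg : ∀ n : ℤ, n < 0 → ∀ x : C n, x = 0)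
    (hDneg : ∀ n : ℤ, n < 0 → ∀ x : D n, x = 0)
    (hCbasis : ∀ n : ℤ, ∃ S : Set (C n), IsOrthogonal κ (ℓC n) S ∧
      LinearIndependent κ (fun x : S => (x : C n)) ∧ Submodule.span κ S = ⊤)
    (hDbasis : ∀ n : ℤ, ∃ S : Set (D n), IsOrthogonal κ (ℓD n) S ∧
      LinearIndependent κ (fun x : S => (x : D n)) ∧ Submodule.span κ S = ⊤)
    (f : ∀ n : ℤ, C n →ₗ[κ] D n)
    (hfchain : ∀ (n : ℤ) (x : C n), dD n (f n x) = f (n - 1) (dC n x))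
    (hffilt : ∀ (n : ℤ) (x : C n), ℓD n (f n x) ≤ ℓC n x)
    (hfq : IsFilteredQuasiIso κ dC ℓC dD ℓD f) :
    ∃ g : ∀ n : ℤ, D n →ₗ[κ] C n,
      (∀ (n : ℤ) (x : D n), dC n (g n x) = g (n - 1) (dD n x)) ∧
      (∀ (n : ℤ) (x : D n), ℓC n (g n x) ≤ ℓD n x) ∧
      (∃ K : ∀ n : ℤ, C n →ₗ[κ] C (n + 1),
        (∀ (n : ℤ) (x : C n), ℓC (n + 1) (K n x) ≤ ℓC n x) ∧
        ∀ (n : ℤ) (x : C n),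
          bdryMap κ dC n (K n x) +
              castL κ (show n - 1 + 1 = n by omega) (K (n - 1) (dC n x)) =
            g n (f n x) - x) ∧
      ∃ L : ∀ n : ℤ, D n →ₗ[κ] D (n + 1),
        (∀ (n : ℤ) (x : D n), ℓD (n + 1) (L n x) ≤ ℓD n x) ∧
        ∀ (n : ℤ) (x : D n),
          bdryMap κ dD n (L n x) +
              castL κ (show n - 1 + 1 = n by omega) (L (n - 1) (dD n x)) =
            f n (g n x) - x := by
  classical
  have H : Hyp dC ℓC dD ℓD f :=
    ⟨hC, hD, hCneg, hDneg, hCbasis, hDbasis, hfchain, hffilt, hfq⟩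
  obtain ⟨s, hsF, hsId⟩ := cone_contraction dC ℓC dD ℓD f H
  -- component identities
  have hFst : ∀ (k : ℤ) (x : C (k - 1) × D k),
      castL κ (show k + 1 - 1 - 1 = k - 1 by omega) (-(dC (k + 1 - 1) ((s k x).1)))
        + castL κ (show k - 1 + 1 - 1 = k - 1 by omega)
            ((s (k - 1) (coneD dC dD f k x)).1) = x.1 :=
    fun k x => congrArg Prod.fst (hsId k x)
  have hSnd : ∀ (k : ℤ) (x : C (k - 1) × D k),
      castL κ (show k + 1 - 1 = k by omega)
          (dD (k + 1) ((s k x).2) + f (k + 1 - 1) ((s k x).1))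
        + castL κ (show k - 1 + 1 = k by omega)
            ((s (k - 1) (coneD dC dD f k x)).2) = x.2 :=
    fun k x => congrArg Prod.snd (hsId k x)
  -- the maps
  let g : ∀ n : ℤ, D n →ₗ[κ] C n := fun n =>
    (castL κ (show n + 1 - 1 = n by omega)).comp
      ((LinearMap.fst κ _ _).comp ((s n).comp (LinearMap.inr κ (C (n - 1)) (D n))))
  let K : ∀ n : ℤ, C n →ₗ[κ] C (n + 1) := fun n =>
    (castL κ (show n + 1 + 1 - 1 = n + 1 by omega)).comp
      ((LinearMap.fst κ _ _).comp ((s (n + 1)).comp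
        ((LinearMap.inl κ (C (n + 1 - 1)) (D (n + 1))).comp
          (castL κ (show n = n + 1 - 1 by omega)))))
  let L : ∀ n : ℤ, D n →ₗ[κ] D (n + 1) := fun n =>
    -((LinearMap.snd κ _ _).comp ((s n).comp (LinearMap.inr κ (C (n - 1)) (D n))))
  have hg : ∀ (n : ℤ) (x : D n),
      g n x = castL κ (show n + 1 - 1 = n by omega) ((s n (0, x)).1) := fun n x => rfl
  have hK : ∀ (n : ℤ) (x : C n),
      K n x = castL κ (show n + 1 + 1 - 1 = n + 1 by omega)
        ((s (n + 1) (castL κ (show n = n + 1 - 1 by omega) x, 0)).1) := fun n x => rfl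
  have hL : ∀ (n : ℤ) (x : D n), L n x = -((s n (0, x)).2) := fun n x => rfl
  have hco0 : ∀ (n : ℤ) (x : D n),
      coneD dC dD f n ((0 : C (n - 1)), x) = (0, dD n x) := by
    intro n x
    rw [coneD_apply]
    apply Prod.ext <;> simp
  refine ⟨g, ?_, ?_, ⟨K, ?_, ?_⟩, ⟨L, ?_, ?_⟩⟩
  · -- g chain map
    intro n x
    have h := hFst n (0, x)
    rw [hco0] at h
    rw [map_neg, neg_add_eq_zero] at h
    rw [hg, hg, d_castL κ dC]
    exact h
  · -- g filtered
    intro n x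
    rw [hg, ell_castL κ ℓC]
    refine le_trans (le_trans (le_max_left _ (ℓD (n + 1) ((s n (0, x)).2))) (hsF n (0, x))) ?_
    show max (ℓC (n - 1) 0) (ℓD n x) ≤ ℓD n x
    rw [ell_zero κ (hC.2.1 (n - 1))]
    exact max_le bot_le le_rfl
  · -- K filtered
    intro n x
    rw [hK, ell_castL κ ℓC]
    refine le_trans (le_trans
      (le_max_left _ (ℓD (n + 1 + 1) ((s (n + 1) (castL κ (show n = n + 1 - 1 by omega) x, 0)).2)))
      (hsF (n + 1) (castL κ (show n = n + 1 - 1 by omega) x, 0))) ?_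
    show max (ℓC (n + 1 - 1) (castL κ (show n = n + 1 - 1 by omega) x)) (ℓD (n + 1) 0)
        ≤ ℓC n x
    rw [ell_castL κ ℓC, ell_zero κ (hD.2.1 (n + 1))]
    exact max_le le_rfl bot_le
  · -- K homotopy identity
    intro n x
    have hco : coneD dC dD f (n + 1) (castL κ (show n = n + 1 - 1 by omega) x, 0)
        = coneCast (κ := κ) (show n = n + 1 - 1 by omega) (-(dC n x), f n x) := by
      rw [coneD_apply, coneCast_apply]
      apply Prod.ext
      · show -(dC (n + 1 - 1) (castL κ (show n = n + 1 - 1 by omega) x))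
            = castL κ (show n - 1 = n + 1 - 1 - 1 by omega) (-(dC n x))
        rw [d_castL κ dC, map_neg]
      · show dD (n + 1) 0 + f (n + 1 - 1) (castL κ (show n = n + 1 - 1 by omega) x)
            = castL κ (show n = n + 1 - 1 by omega) (f n x)
        rw [map_zero, zero_add, map_castL κ f]
    have h := hFst (n + 1) (castL κ (show n = n + 1 - 1 by omega) x, 0)
    rw [hco, coneShift_coneCast (κ := κ) s] at h
    have hsplit : s n ((-(dC n x), f n x) : C (n - 1) × D n)
        = -(s n (dC n x, 0)) + s n (0, f n x) := by
      have hv : ((-(dC n x), f n x) : C (n - 1) × D n)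
          = -((dC n x, (0 : D n)) : C (n - 1) × D n) + ((0 : C (n - 1)), f n x) := by
        apply Prod.ext
        · show -(dC n x) = -(dC n x) + 0
          rw [add_zero]
        · show f n x = -0 + f n x
          rw [neg_zero, zero_add]
      rw [hv, map_add, map_neg]
    rw [hsplit] at h
    have h2 : castL κ (show n + 1 + 1 - 1 - 1 = n + 1 - 1 by omega)
          (-(dC (n + 1 + 1 - 1)
            ((s (n + 1) (castL κ (show n = n + 1 - 1 by omega) x, 0)).1)))
        + castL κ (show n + 1 - 1 + 1 - 1 = n + 1 - 1 by omega)
          (castL κ (show n + 1 - 1 = n + 1 - 1 + 1 - 1 by omega)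
            ((-(s n (dC n x, 0)) + s n (0, f n x)).1))
        = castL κ (show n = n + 1 - 1 by omega) x := h
    have h3 := congrArg (castL κ (show n + 1 - 1 = n by omega)) h2
    rw [map_add] at h3
    rw [castL_castL, castL_castL, castL_castL, castL_castL] at h3
    rw [castL_self] at h3
    rw [Prod.fst_add, Prod.fst_neg] at h3
    rw [map_add, map_neg, map_neg] at h3
    -- rewrite the goal
    have E1 : bdryMap κ dC n (K n x)
        = castL κ (show n + 1 + 1 - 1 - 1 = n by omega)
            (dC (n + 1 + 1 - 1)
              ((s (n + 1) (castL κ (show n = n + 1 - 1 by omega) x, 0)).1)) := by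
      rw [hK, bdryMap_apply, d_castL κ dC, castL_castL]
    have e : ((castL κ (show n - 1 = n - 1 + 1 - 1 by omega) (dC n x) : C (n - 1 + 1 - 1)),
          (0 : D (n - 1 + 1)))
        = coneCast (κ := κ) (show n = n - 1 + 1 by omega) (dC n x, 0) := by
      rw [coneCast_apply]
      apply Prod.ext
      · rfl
      · show (0 : D (n - 1 + 1)) = castL κ (show n = n - 1 + 1 by omega) 0
        rw [map_zero]
    have E2 : castL κ (show n - 1 + 1 = n by omega) (K (n - 1) (dC n x))
        = castL κ (show n + 1 - 1 = n by omega) ((s n (dC n x, 0)).1) := by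
      rw [hK, e, coneShift_coneCast (κ := κ) s]
      have e2 : (coneCast (κ := κ) (show n + 1 = n - 1 + 1 + 1 by omega) (s n (dC n x, 0))).1
          = castL κ (show n + 1 - 1 = n - 1 + 1 + 1 - 1 by omega) ((s n (dC n x, 0)).1) := rfl
      rw [e2, castL_castL, castL_castL]
    rw [E1, E2, hg]
    simp only [castL_eq_castF] at h3 ⊢
    rw [eq_sub_iff_add_eq]
    nth_rewrite 3 [← h3]
    abel
  · -- L filtered
    intro n x
    rw [hL, ell_neg κ (hD.2.1 (n + 1))]
    refine le_trans (le_trans (le_max_right (ℓC (n + 1 - 1) ((s n (0, x)).1)) _) (hsF n (0, x))) ?_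
    show max (ℓC (n - 1) 0) (ℓD n x) ≤ ℓD n x
    rw [ell_zero κ (hC.2.1 (n - 1))]
    exact max_le bot_le le_rfl
  · -- L homotopy identity
    intro n x
    have h := hSnd n (0, x)
    rw [hco0] at h
    have h2 : castL κ (show n + 1 - 1 = n by omega) (dD (n + 1) ((s n (0, x)).2))
          + castL κ (show n + 1 - 1 = n by omega) (f (n + 1 - 1) ((s n (0, x)).1))
          + castL κ (show n - 1 + 1 = n by omega) ((s (n - 1) (0, dD n x)).2) = x := by
      rw [← map_add]
      exact h
    rw [hL, hL, hg, bdryMap_apply, map_castL κ f]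
    simp only [map_neg]
    simp only [castL_eq_castF] at h2 ⊢
    rw [eq_sub_iff_add_eq]
    nth_rewrite 3 [← h2]
    abel
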